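/- Sklar's theorem (uniqueness part): if the marginals F_1,...,F_n of a joint distribution function F on ℝ^n are continuous, then there is at most one copula C with F(x_1,...,x_n) = C(F_1(x_1),...,F_n(x_n)) for all x; namely C is uniquely determined on [0,1]^n. -/
import Mathlib

open MeasureTheory Set Filter

noncomputable def JointCDF {n : ℕ} (μ : Measure (Fin n → ℝ)) : (Fin n → ℝ) → ℝ :=
  fun x => (μ {y | ∀ i, y i ≤ x i}).toReal

def IsCopula {n : ℕ} (C : (Fin n → ℝ) → ℝ) : Prop :=
  ∃ μ : Measure (Fin n → ℝ), IsProbabilityMeasure μ ∧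
    (∀ i : Fin n, μ.map (fun y => y i) = volume.restrict (Set.Icc (0:ℝ) 1)) ∧
    (∀ u : Fin n → ℝ, (∀ i, u i ∈ Set.Icc (0:ℝ) 1) → C u = JointCDF μ u)

def IsCDF (F : ℝ → ℝ) : Prop :=
  Monotone F ∧ (∀ x, ContinuousWithinAt F (Set.Ici x) x) ∧
    Tendsto F atBot (nhds 0) ∧ Tendsto F atTop (nhds 1)

lemma jointCDF_lip {n : ℕ} (μ : Measure (Fin n → ℝ)) [IsProbabilityMeasure μ]
    (hm : ∀ i : Fin n, μ.map (fun y => y i) = volume.restrict (Set.Icc (0:ℝ) 1))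
    (u v : Fin n → ℝ) :
    JointCDF μ u ≤ JointCDF μ v + ∑ i, |u i - v i| := by
  have hsub : {y : Fin n → ℝ | ∀ i, y i ≤ u i} ⊆
      {y : Fin n → ℝ | ∀ i, y i ≤ v i} ∪ ⋃ i, (fun y : Fin n → ℝ => y i) ⁻¹' Ioc (v i) (u i) := by
    intro y hy
    by_cases h : ∀ i, y i ≤ v i
    · exact Or.inl h
    · push_neg at h
      obtain ⟨i, hi⟩ := h
      exact Or.inr (mem_iUnion.2 ⟨i, ⟨hi, hy i⟩⟩)
  have hmeas : ∀ i, μ ((fun y : Fin n → ℝ => y i) ⁻¹' Ioc (v i) (u i))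
      ≤ ENNReal.ofReal |u i - v i| := by
    intro i
    have := Measure.map_apply (measurable_pi_apply i) (measurableSet_Ioc (a := v i) (b := u i))
      (μ := μ)
    rw [hm i] at this
    rw [← this]
    calc volume.restrict (Set.Icc (0:ℝ) 1) (Ioc (v i) (u i))
        ≤ volume (Ioc (v i) (u i)) := Measure.restrict_apply_le _ _
      _ = ENNReal.ofReal (u i - v i) := by simp [Real.volume_Ioc]
      _ ≤ ENNReal.ofReal |u i - v i| := ENNReal.ofReal_le_ofReal (le_abs_self _)
  have key : μ {y : Fin n → ℝ | ∀ i, y i ≤ u i} ≤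
      μ {y : Fin n → ℝ | ∀ i, y i ≤ v i} + ENNReal.ofReal (∑ i, |u i - v i|) := by
    calc μ {y : Fin n → ℝ | ∀ i, y i ≤ u i}
        ≤ μ ({y : Fin n → ℝ | ∀ i, y i ≤ v i} ∪ ⋃ i, (fun y : Fin n → ℝ => y i) ⁻¹' Ioc (v i) (u i)) :=
          measure_mono hsub
      _ ≤ μ {y : Fin n → ℝ | ∀ i, y i ≤ v i} +
          μ (⋃ i, (fun y : Fin n → ℝ => y i) ⁻¹' Ioc (v i) (u i)) := measure_union_le _ _
      _ ≤ μ {y : Fin n → ℝ | ∀ i, y i ≤ v i} +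
          ∑ i, μ ((fun y : Fin n → ℝ => y i) ⁻¹' Ioc (v i) (u i)) := by
          gcongr
          exact measure_iUnion_fintype_le _ _
      _ ≤ μ {y : Fin n → ℝ | ∀ i, y i ≤ v i} + ∑ i, ENNReal.ofReal |u i - v i| := by
          gcongr with i
          exact hmeas i
      _ = μ {y : Fin n → ℝ | ∀ i, y i ≤ v i} + ENNReal.ofReal (∑ i, |u i - v i|) := by
          rw [ENNReal.ofReal_sum_of_nonneg (fun i _ => abs_nonneg _)]
  have h1 : μ {y : Fin n → ℝ | ∀ i, y i ≤ v i} ≠ ⊤ := measure_ne_top _ _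
  have := ENNReal.toReal_mono (by finiteness) key
  rwa [ENNReal.toReal_add h1 ENNReal.ofReal_ne_top,
    ENNReal.toReal_ofReal (Finset.sum_nonneg fun i _ => abs_nonneg _)] at this

lemma copula_abs_le {n : ℕ} (μ : Measure (Fin n → ℝ)) [IsProbabilityMeasure μ]
    (hm : ∀ i : Fin n, μ.map (fun y => y i) = volume.restrict (Set.Icc (0:ℝ) 1))
    (u v : Fin n → ℝ) :
    |JointCDF μ u - JointCDF μ v| ≤ ∑ i, |u i - v i| := by
  rw [abs_sub_le_iff]
  constructor
  · linarith [jointCDF_lip μ hm u v]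
  · have := jointCDF_lip μ hm v u
    have h : ∑ i, |v i - u i| = ∑ i, |u i - v i| := by
      congr 1; ext i; rw [abs_sub_comm]
    linarith [h ▸ this]

/-- **Sklar's theorem, uniqueness part.** If the marginals `F i` are
continuous CDFs, then there is at most one copula `C` with
`F x = C (F 1 x1, …, F n xn)` for all `x`: any two copulas `C₁, C₂` compatible with the
same joint distribution function agree on the whole cube `[0,1]^n`. -/
theorem sklar_uniqueness {n : ℕ} (F : (Fin n → ℝ) → ℝ) (Fm : Fin n → ℝ → ℝ)
    (hFm : ∀ i, IsCDF (Fm i)) (hFmcont : ∀ i, Continuous (Fm i))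
    (C₁ C₂ : (Fin n → ℝ) → ℝ) (hC₁ : IsCopula C₁) (hC₂ : IsCopula C₂)
    (h₁ : ∀ x : Fin n → ℝ, F x = C₁ (fun i => Fm i (x i)))
    (h₂ : ∀ x : Fin n → ℝ, F x = C₂ (fun i => Fm i (x i))) :
    ∀ u : Fin n → ℝ, (∀ i, u i ∈ Set.Icc (0:ℝ) 1) → C₁ u = C₂ u := by
  obtain ⟨μ₁, hp₁, hmar₁, hcdf₁⟩ := hC₁
  obtain ⟨μ₂, hp₂, hmar₂, hcdf₂⟩ := hC₂
  -- range of each Fm i is in [0,1]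
  have hrange : ∀ i x, Fm i x ∈ Set.Icc (0:ℝ) 1 := by
    intro i x
    obtain ⟨hmono, _, hbot, htop⟩ := hFm i
    constructor
    · exact le_of_tendsto hbot (eventually_atBot.2 ⟨x, fun z hz => hmono hz⟩)
    · exact ge_of_tendsto htop (eventually_atTop.2 ⟨x, fun z hz => hmono hz⟩)
  -- density: [0,1] ⊆ closure (range (Fm i))
  have hdense : ∀ i, Set.Icc (0:ℝ) 1 ⊆ closure (Set.range (Fm i)) := by
    intro i
    obtain ⟨_, _, hbot, htop⟩ := hFm i
    have h0 : (0:ℝ) ∈ closure (Set.range (Fm i)) :=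
      mem_closure_of_tendsto hbot (Eventually.of_forall fun x => mem_range_self x)
    have h1 : (1:ℝ) ∈ closure (Set.range (Fm i)) :=
      mem_closure_of_tendsto htop (Eventually.of_forall fun x => mem_range_self x)
    have hpc : IsPreconnected (closure (Set.range (Fm i))) :=
      (isPreconnected_range (hFmcont i)).closure
    exact hpc.Icc_subset h0 h1
  intro u hu
  -- suffices to show the difference is small
  have main : ∀ ε : ℝ, 0 < ε → |C₁ u - C₂ u| ≤ ε := by
    intro ε hε
    set δ := ε / (2 * n + 2) with hδdef
    have hδ : 0 < δ := by positivity
    -- choose approximations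
    have hex : ∀ i : Fin n, ∃ x : ℝ, |Fm i x - u i| < δ := by
      intro i
      have hu' := hdense i (hu i)
      rw [Metric.mem_closure_iff] at hu'
      obtain ⟨b, ⟨x, rfl⟩, hb⟩ := hu' δ hδ
      exact ⟨x, by rwa [Real.dist_eq, abs_sub_comm] at hb⟩
    choose x hx using hex
    set v : Fin n → ℝ := fun i => Fm i (x i) with hv
    have hvcube : ∀ i, v i ∈ Set.Icc (0:ℝ) 1 := fun i => hrange i (x i)
    have heq : C₁ v = C₂ v := by
      have e1 := h₁ x
      have e2 := h₂ x
      rw [← e1, ← e2]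
    have hsum : ∑ i, |u i - v i| ≤ n * δ := by
      calc ∑ i, |u i - v i| ≤ ∑ _i : Fin n, δ :=
            Finset.sum_le_sum fun i _ => by
              have := hx i
              rw [abs_sub_comm] at this
              exact le_of_lt this
        _ = n * δ := by simp [mul_comm]
    have hb1 : |C₁ u - C₁ v| ≤ ∑ i, |u i - v i| := by
      rw [hcdf₁ u hu, hcdf₁ v hvcube]
      exact copula_abs_le μ₁ hmar₁ u v
    have hb2 : |C₂ v - C₂ u| ≤ ∑ i, |u i - v i| := by
      rw [hcdf₂ u hu, hcdf₂ v hvcube]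
      have := copula_abs_le μ₂ hmar₂ v u
      have h : ∑ i, |v i - u i| = ∑ i, |u i - v i| := by
        congr 1; ext i; rw [abs_sub_comm]
      linarith [h ▸ this]
    have h3 : |C₁ v - C₂ u| = |C₂ v - C₂ u| := by rw [heq]
    have : |C₁ u - C₂ u| ≤ |C₁ u - C₁ v| + |C₂ v - C₂ u| := by
      have t := abs_sub_le (C₁ u) (C₁ v) (C₂ u)
      rwa [h3] at t
    have hnδ : (n : ℝ) * δ + (n : ℝ) * δ ≤ ε := by
      have h2 : (0:ℝ) < 2 * (n:ℝ) + 2 := by positivity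
      have hδε : δ * (2 * (n:ℝ) + 2) = ε := by
        rw [hδdef]; field_simp
      nlinarith [hδ.le]
    linarith
  have habs : |C₁ u - C₂ u| ≤ 0 := by
    by_contra h
    push_neg at h
    have := main (|C₁ u - C₂ u| / 2) (by linarith)
    linarith
  have := abs_nonneg (C₁ u - C₂ u)
  have : |C₁ u - C₂ u| = 0 := le_antisymm habs this
  linarith [abs_eq_zero.mp this |> sub_eq_zero.mp]
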